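/- Let $(P_1,\dots,P_n)$ and $(Q_1,\dots,Q_n)$ be tuples of probability measures. If $P_1,\dots,P_n$ are mutually singular and $(P_1,\dots,P_n)\prec_h(Q_1,\dots,Q_n)$, then $Q_1,\dots,Q_n$ are also mutually singular. -/

import Mathlib

open MeasureTheory
open scoped ENNReal

section Aux

lemma convexOn_sup' {ι : Type*} (s : Finset ι) (hs : s.Nonempty) :
    ConvexOn ℝ Set.univ (fun y : ι → ℝ => s.sup' hs (fun i => y i)) := by
  induction hs using Finset.Nonempty.cons_induction with
  | singleton a =>
      simp only [Finset.sup'_singleton]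
      exact (LinearMap.proj (R := ℝ) (φ := fun _ : ι => ℝ) a).convexOn convex_univ
  | cons a s ha hs ih =>
      have he : (fun y : ι → ℝ => (Finset.cons a s ha).sup' (Finset.cons_nonempty ha)
            fun i => y i) = fun y : ι → ℝ => (y a) ⊔ (s.sup' hs fun i => y i) :=
        funext fun y => Finset.sup'_cons hs (fun i => y i)
      rw [he]
      exact ((LinearMap.proj (R := ℝ) (φ := fun _ : ι => ℝ) a).convexOn convex_univ).sup ih

lemma sup'_eq_sum_of_pairwise {n : ℕ} (hne : (Finset.univ : Finset (Fin n)).Nonempty)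
    (x : Fin n → ℝ) (hx : ∀ i, 0 ≤ x i)
    (hp : ∀ i j, i ≠ j → x i = 0 ∨ x j = 0) :
    Finset.univ.sup' hne x = ∑ i, x i := by
  by_cases h : ∀ i, x i = 0
  · have h1 : Finset.univ.sup' hne x = 0 := by
      obtain ⟨i0, _⟩ := hne
      refine le_antisymm (Finset.sup'_le _ _ fun i _ => (h i).le) ?_
      simpa [h i0] using Finset.le_sup' x (Finset.mem_univ i0)
    simp [h1, Finset.sum_eq_zero fun i _ => h i]
  · push_neg at h
    obtain ⟨k, hk⟩ := h
    have hz : ∀ j, j ≠ k → x j = 0 := fun j hj => ((hp j k hj).resolve_right hk)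
    have h1 : Finset.univ.sup' hne x = x k := by
      refine le_antisymm (Finset.sup'_le _ _ fun i _ => ?_)
        (Finset.le_sup' x (Finset.mem_univ k))
      rcases eq_or_ne i k with rfl | hik
      · exact le_rfl
      · rw [hz i hik]; exact hx k
    rw [h1, Finset.sum_eq_single k (fun j _ hj => hz j hj) (by simp)]

lemma pairwise_of_sup'_eq_sum {n : ℕ} (hne : (Finset.univ : Finset (Fin n)).Nonempty)
    (x : Fin n → ℝ) (hx : ∀ i, 0 ≤ x i)
    (h : Finset.univ.sup' hne x = ∑ i, x i) :
    ∀ i j, i ≠ j → x i = 0 ∨ x j = 0 := by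
  obtain ⟨k, -, hk⟩ := Finset.exists_mem_eq_sup' hne x
  have hsum : ∑ i, x i = x k := by rw [← h, hk]
  have hz : ∀ j, j ≠ k → x j = 0 := by
    intro j hj
    have h0 : ∑ i ∈ Finset.univ.erase k, x i = 0 := by
      have := Finset.add_sum_erase Finset.univ x (Finset.mem_univ k)
      rw [hsum] at this
      linarith
    have := (Finset.sum_eq_zero_iff_of_nonneg (fun i _ => hx i)).mp h0
    exact this j (Finset.mem_erase.mpr ⟨hj, Finset.mem_univ j⟩)
  intro i j hij
  rcases eq_or_ne i k with rfl | hik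
  · exact Or.inr (hz j (Ne.symm hij))
  · exact Or.inl (hz i hik)

variable {Ω : Type} [MeasurableSpace Ω]

lemma isFiniteMeasure_finset_sum {ι : Type*} (s : Finset ι) (μ : ι → Measure Ω)
    [∀ i, IsFiniteMeasure (μ i)] : IsFiniteMeasure (∑ i ∈ s, μ i) := by
  constructor
  rw [Measure.finset_sum_apply]
  exact ENNReal.sum_lt_top.mpr fun i _ => measure_lt_top _ _

lemma rnDeriv_finset_sum {ι : Type*} (s : Finset ι) (μ : ι → Measure Ω) (ν : Measure Ω)
    [∀ i, IsFiniteMeasure (μ i)] [SigmaFinite ν] :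
    (∑ i ∈ s, μ i).rnDeriv ν =ᵐ[ν] fun x => ∑ i ∈ s, (μ i).rnDeriv ν x := by
  classical
  induction s using Finset.induction with
  | empty =>
      simp only [Finset.sum_empty]
      exact Measure.rnDeriv_zero ν
  | @insert a s ha ih =>
      haveI := isFiniteMeasure_finset_sum s μ
      rw [Finset.sum_insert ha]
      have h := Measure.rnDeriv_add' (μ a) (∑ i ∈ s, μ i) ν
      filter_upwards [h, ih] with x h1 h2
      rw [h1, Pi.add_apply, h2, Finset.sum_insert ha]

variable {n : ℕ} (hn : 0 < n) (R : Fin n → Measure Ω) [∀ i, IsProbabilityMeasure (R i)]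

include hn in
lemma avg_isProb : IsProbabilityMeasure ((n : ℝ≥0∞)⁻¹ • ∑ j, R j) := by
  constructor
  rw [Measure.smul_apply, Measure.finset_sum_apply]
  simp only [measure_univ, Finset.sum_const, Finset.card_univ, Fintype.card_fin, nsmul_eq_mul,
    mul_one, smul_eq_mul]
  exact ENNReal.inv_mul_cancel (by exact_mod_cast hn.ne') (ENNReal.natCast_ne_top n)

lemma avg_ac (i : Fin n) : R i ≪ ((n : ℝ≥0∞)⁻¹ • ∑ j, R j) := by
  intro s hs
  rw [Measure.smul_apply, smul_eq_mul] at hs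
  have hsum : (∑ j, R j) s = 0 := by
    rcases mul_eq_zero.mp hs with h | h
    · exact absurd h (ENNReal.inv_ne_zero.mpr (ENNReal.natCast_ne_top n))
    · exact h
  rw [Measure.finset_sum_apply] at hsum
  have := (Finset.sum_eq_zero_iff).mp hsum i (Finset.mem_univ i)
  exact this

include hn in
lemma avg_sum_rnDeriv :
    ∀ᵐ x ∂((n : ℝ≥0∞)⁻¹ • ∑ j, R j),
      ∑ i, (R i).rnDeriv ((n : ℝ≥0∞)⁻¹ • ∑ j, R j) x = (n : ℝ≥0∞) := by
  set ν : Measure Ω := (n : ℝ≥0∞)⁻¹ • ∑ j, R j with hν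
  haveI : IsProbabilityMeasure ν := avg_isProb hn R
  have h2 : (∑ j, R j) = (n : ℝ≥0∞) • ν := by
    rw [hν, smul_smul, ENNReal.mul_inv_cancel (by exact_mod_cast hn.ne')
      (ENNReal.natCast_ne_top n), one_smul]
  have h1 := rnDeriv_finset_sum Finset.univ R ν
  have h3 := Measure.rnDeriv_smul_left_of_ne_top' ν ν (r := (n : ℝ≥0∞))
    (ENNReal.natCast_ne_top n)
  have h4 := Measure.rnDeriv_self ν
  rw [h2] at h1
  filter_upwards [h1, h3, h4] with x h1x h3x h4x
  rw [← h1x, h3x, Pi.smul_apply, h4x, smul_eq_mul, mul_one]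

end Aux

/-- Proposition 3.6 (v). If `P₁,…,Pₙ` are mutually singular and
`(P₁,…,Pₙ) ≺ₕ (Q₁,…,Qₙ)` (multivariate convex order between the vectors of Radon–Nikodym
derivatives with respect to the average measures `P = (1/n)∑ Pᵢ` and `Q = (1/n)∑ Qᵢ`),
then `Q₁,…,Qₙ` are mutually singular as well. -/
theorem het_order_preserves_mutual_singularity
    {Ω₁ Ω₂ : Type} [MeasurableSpace Ω₁] [MeasurableSpace Ω₂]
    (n : ℕ) (hn : 0 < n)
    (P : Fin n → Measure Ω₁) (Q : Fin n → Measure Ω₂)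
    [∀ i, IsProbabilityMeasure (P i)] [∀ i, IsProbabilityMeasure (Q i)]
    (hsing : Pairwise fun i j => P i ⟂ₘ P j)
    (hh : ∀ f : (Fin n → ℝ) → ℝ, ConvexOn ℝ Set.univ f →
      ∫ x, f (fun i =>
          ((P i).rnDeriv ((n : ℝ≥0∞)⁻¹ • ∑ j, P j) x).toReal) ∂((n : ℝ≥0∞)⁻¹ • ∑ j, P j) ≤
        ∫ ω, f (fun i =>
          ((Q i).rnDeriv ((n : ℝ≥0∞)⁻¹ • ∑ j, Q j) ω).toReal) ∂((n : ℝ≥0∞)⁻¹ • ∑ j, Q j)) :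
    Pairwise fun i j => Q i ⟂ₘ Q j := by
  classical
  haveI : NeZero n := ⟨hn.ne'⟩
  have hne : (Finset.univ : Finset (Fin n)).Nonempty := Finset.univ_nonempty
  set Pb : Measure Ω₁ := (n : ℝ≥0∞)⁻¹ • ∑ j, P j with hPb
  set Qb : Measure Ω₂ := (n : ℝ≥0∞)⁻¹ • ∑ j, Q j with hQb
  haveI : IsProbabilityMeasure Pb := avg_isProb hn P
  haveI : IsProbabilityMeasure Qb := avg_isProb hn Q
  set X : Ω₁ → Fin n → ℝ := fun x i => ((P i).rnDeriv Pb x).toReal with hX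
  set Y : Ω₂ → Fin n → ℝ := fun ω i => ((Q i).rnDeriv Qb ω).toReal with hY
  -- finiteness of rnDerivs
  have hPfin : ∀ᵐ x ∂Pb, ∀ i, (P i).rnDeriv Pb x < ∞ :=
    (MeasureTheory.ae_all_iff).mpr fun i => Measure.rnDeriv_lt_top (P i) Pb
  have hQfin : ∀ᵐ ω ∂Qb, ∀ i, (Q i).rnDeriv Qb ω < ∞ :=
    (MeasureTheory.ae_all_iff).mpr fun i => Measure.rnDeriv_lt_top (Q i) Qb
  -- sums of rnDerivs equal n a.e.
  have hPsum : ∀ᵐ x ∂Pb, ∑ i, (P i).rnDeriv Pb x = (n : ℝ≥0∞) := avg_sum_rnDeriv hn P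
  have hQsum : ∀ᵐ ω ∂Qb, ∑ i, (Q i).rnDeriv Qb ω = (n : ℝ≥0∞) := avg_sum_rnDeriv hn Q
  have hPsumR : ∀ᵐ x ∂Pb, ∑ i, X x i = (n : ℝ) := by
    filter_upwards [hPsum, hPfin] with x h1 h2
    rw [hX]
    simp only
    rw [← ENNReal.toReal_sum (fun i _ => (h2 i).ne), h1]
    simp
  have hQsumR : ∀ᵐ ω ∂Qb, ∑ i, Y ω i = (n : ℝ) := by
    filter_upwards [hQsum, hQfin] with ω h1 h2
    rw [hY]
    simp only
    rw [← ENNReal.toReal_sum (fun i _ => (h2 i).ne), h1]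
    simp
  -- the convex function
  set f : (Fin n → ℝ) → ℝ := fun y => Finset.univ.sup' hne (fun i => y i) with hf
  have hfconv : ConvexOn ℝ Set.univ f := convexOn_sup' Finset.univ hne
  -- on the P side, rnDerivs are pairwise a.e. disjointly supported
  have hPpair : ∀ᵐ x ∂Pb, ∀ i j, i ≠ j → X x i = 0 ∨ X x j = 0 := by
    rw [MeasureTheory.ae_all_iff]
    intro i
    rw [MeasureTheory.ae_all_iff]
    intro j
    rcases eq_or_ne i j with rfl | hij
    · exact Filter.Eventually.of_forall fun x h => absurd rfl h
    obtain ⟨t, htm, hit, hjt⟩ := hsing hij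
    have hii : ∀ᵐ x ∂Pb, x ∈ t → (P i).rnDeriv Pb x = 0 := by
      have h0 : ∫⁻ x in t, (P i).rnDeriv Pb x ∂Pb = 0 := by
        rw [Measure.setLIntegral_rnDeriv (avg_ac P i) t, hit]
      have := (lintegral_eq_zero_iff (Measure.measurable_rnDeriv (P i) Pb)).mp h0
      rw [Filter.EventuallyEq, ae_restrict_iff' htm] at this
      exact this
    have hjj : ∀ᵐ x ∂Pb, x ∈ tᶜ → (P j).rnDeriv Pb x = 0 := by
      have h0 : ∫⁻ x in tᶜ, (P j).rnDeriv Pb x ∂Pb = 0 := by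
        rw [Measure.setLIntegral_rnDeriv (avg_ac P j) tᶜ, hjt]
      have := (lintegral_eq_zero_iff (Measure.measurable_rnDeriv (P j) Pb)).mp h0
      rw [Filter.EventuallyEq, ae_restrict_iff' htm.compl] at this
      exact this
    filter_upwards [hii, hjj] with x h1 h2 _
    by_cases hx : x ∈ t
    · exact Or.inl (by rw [hX]; simp [h1 hx])
    · exact Or.inr (by rw [hX]; simp [h2 hx])
  -- hence f ∘ X = n a.e.
  have hXnonneg : ∀ x i, 0 ≤ X x i := fun x i => ENNReal.toReal_nonneg
  have hfX : ∀ᵐ x ∂Pb, f (X x) = (n : ℝ) := by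
    filter_upwards [hPpair, hPsumR] with x h1 h2
    rw [hf]
    simp only
    rw [sup'_eq_sum_of_pairwise hne (X x) (hXnonneg x) h1, h2]
  have hintP : ∫ x, f (X x) ∂Pb = (n : ℝ) := by
    rw [MeasureTheory.integral_congr_ae hfX]
    simp
  -- on the Q side
  have hYnonneg : ∀ ω i, 0 ≤ Y ω i := fun ω i => ENNReal.toReal_nonneg
  have hfY_le : ∀ᵐ ω ∂Qb, f (Y ω) ≤ (n : ℝ) := by
    filter_upwards [hQsumR] with ω h1
    rw [hf]
    refine Finset.sup'_le _ _ fun i _ => ?_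
    calc Y ω i ≤ ∑ j, Y ω j :=
          Finset.single_le_sum (fun j _ => hYnonneg ω j) (Finset.mem_univ i)
      _ = (n : ℝ) := h1
  have hfY_nonneg : ∀ ω, 0 ≤ f (Y ω) := by
    intro ω
    obtain ⟨i0, _⟩ := hne
    exact le_trans (hYnonneg ω i0) (Finset.le_sup' _ (Finset.mem_univ i0))
  have hfY_meas : Measurable fun ω => f (Y ω) := by
    have he : (fun ω => f (Y ω))
        = Finset.univ.sup' hne (fun i ω => ((Q i).rnDeriv Qb ω).toReal) :=
      funext fun ω => (Finset.sup'_apply hne (fun i ω => ((Q i).rnDeriv Qb ω).toReal) ω).symm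
    rw [he]
    exact Finset.measurable_sup' hne fun i _ =>
      ((Q i).measurable_rnDeriv Qb).ennreal_toReal
  have hfY_int : Integrable (fun ω => f (Y ω)) Qb := by
    refine Integrable.mono' (integrable_const (n : ℝ)) hfY_meas.aestronglyMeasurable ?_
    filter_upwards [hfY_le] with ω h1
    rw [Real.norm_eq_abs, abs_of_nonneg (hfY_nonneg ω)]
    exact h1
  have hintQ : (n : ℝ) ≤ ∫ ω, f (Y ω) ∂Qb := by
    rw [← hintP]
    exact hh f hfconv
  -- so f ∘ Y = n a.e.
  have hfY_eq : ∀ᵐ ω ∂Qb, f (Y ω) = (n : ℝ) := by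
    have hint2 : ∫ ω, ((n : ℝ) - f (Y ω)) ∂Qb = 0 := by
      rw [MeasureTheory.integral_sub (integrable_const _) hfY_int]
      have h1 : ∫ (_ : Ω₂), (n : ℝ) ∂Qb = (n : ℝ) := by simp
      have h2 : ∫ ω, f (Y ω) ∂Qb ≤ (n : ℝ) := by
        calc ∫ ω, f (Y ω) ∂Qb ≤ ∫ (_ : Ω₂), (n : ℝ) ∂Qb :=
              integral_mono_ae hfY_int (integrable_const _) hfY_le
          _ = (n : ℝ) := h1
      rw [h1]
      linarith [hintQ]
    have := (integral_eq_zero_iff_of_nonneg_ae ?_ ((integrable_const _).sub hfY_int)).mp hint2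
    · filter_upwards [this] with ω hω
      have h0 : (n : ℝ) - f (Y ω) = 0 := by simpa using hω
      linarith
    · filter_upwards [hfY_le] with ω hω
      simp only [Pi.sub_apply, Pi.zero_apply, sub_nonneg]
      exact hω
  -- hence pairwise disjoint supports a.e.
  have hQpair : ∀ᵐ ω ∂Qb, ∀ i j, i ≠ j → (Q i).rnDeriv Qb ω = 0 ∨ (Q j).rnDeriv Qb ω = 0 := by
    filter_upwards [hfY_eq, hQsumR, hQfin] with ω h1 h2 h3
    intro i j hij
    have hsup : Finset.univ.sup' hne (Y ω) = ∑ i, Y ω i := by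
      have he : Finset.univ.sup' hne (Y ω) = f (Y ω) := rfl
      rw [he, h1]
      exact h2.symm
    have hp := pairwise_of_sup'_eq_sum hne (Y ω) (hYnonneg ω) hsup i j hij
    rcases hp with h | h
    · exact Or.inl (by
        have := (ENNReal.toReal_eq_zero_iff _).mp h
        exact this.resolve_right (h3 i).ne)
    · exact Or.inr (by
        have := (ENNReal.toReal_eq_zero_iff _).mp h
        exact this.resolve_right (h3 j).ne)
  -- conclude mutual singularity
  intro i j hij
  set s : Set Ω₂ := (fun ω => (Q i).rnDeriv Qb ω) ⁻¹' {0} with hs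
  have hsm : MeasurableSet s := (Measure.measurable_rnDeriv (Q i) Qb) (measurableSet_singleton 0)
  refine ⟨s, hsm, ?_, ?_⟩
  · rw [← Measure.setLIntegral_rnDeriv (avg_ac Q i) s]
    rw [setLIntegral_congr_fun_ae hsm
      (Filter.Eventually.of_forall fun ω (hω : ω ∈ s) => (hω : _ = (0:ℝ≥0∞)))]
    simp
  · rw [← Measure.setLIntegral_rnDeriv (avg_ac Q j) sᶜ]
    have hae : ∀ᵐ ω ∂Qb, ω ∈ sᶜ → (Q j).rnDeriv Qb ω = 0 := by
      filter_upwards [hQpair] with ω h1 hω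
      have hi0 : (Q i).rnDeriv Qb ω ≠ 0 := hω
      exact (h1 i j hij).resolve_left hi0
    rw [setLIntegral_congr_fun_ae hsm.compl hae]
    simp
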